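/- arXiv:2210.02566 — 2 statements merged into one kernel-verified Lean document; each statement's English description precedes it below -/
import Mathlib

section
/- Define the operation Der on pairs of formal power series over a commutative ring by Der(d, h) = (h', t·d), where h' is the formal derivative. Then for every power series d(t) = ∑_i d_i t^i and every m ≥ 0, the (2m+1)-fold iterate satisfies Der^{2m+1}(d(t), t) = (1, t·∑_{i≥0} d_i·(i+1)^m·t^i). That is, iterating Der an odd number 2m+1 of times on the Appell-subgroup Riordan array 𝓡(d(t), t) yields the Lagrange-subgroup Riordan array 𝓡(1, t·∑_{i≥0} d_i (i+1)^m t^i). -/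
open PowerSeries

/-- The operation `Der` on pairs of formal power series:
`Der(d, h) = (h', t·d)`. -/
noncomputable def riordanDer {R : Type*} [CommRing R] (p : R⟦X⟧ × R⟦X⟧) : R⟦X⟧ × R⟦X⟧ :=
  (p.2.derivativeFun, X * p.1)

lemma derivativeFun_X_mul {R : Type*} [CommRing R] (d : R⟦X⟧) :
    (X * d).derivativeFun = PowerSeries.mk (fun i => coeff i d * ((i + 1 : ℕ) : R)) := by
  ext n
  change coeff n (d⁄dX R _) = _
  rw [coeff_derivativeFun, coeff_mk, coeff_succ_X_mul]
  push_cast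
  ring

lemma derivativeFun_X' {R : Type*} [CommRing R] :
    (X : R⟦X⟧).derivativeFun = 1 := by
  ext n
  change coeff n (d⁄dX R _) = _
  rw [coeff_derivativeFun]
  simp [coeff_X, coeff_one]
  rcases n with _ | n <;> simp

lemma der_twice {R : Type*} [CommRing R] (d : R⟦X⟧) :
    riordanDer^[2] (d, (X : R⟦X⟧)) =
      (PowerSeries.mk (fun i => coeff i d * ((i + 1 : ℕ) : R)), (X : R⟦X⟧)) := by
  show riordanDer (riordanDer (d, X)) = _
  simp [riordanDer, derivativeFun_X_mul, derivativeFun_X', mul_one]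

/-- odd iterates of `Der` on the Appell-subgroup array `𝓡(d(t), t)`:
`Der^{2m+1}(𝓡(d, t)) = 𝓡(1, t·∑_i d_i (i+1)^m t^i)`. -/
theorem der_odd_iterate_appell {R : Type*} [CommRing R] (d : R⟦X⟧) (m : ℕ) :
    riordanDer^[2 * m + 1] (d, (X : R⟦X⟧)) =
      ((1 : R⟦X⟧),
        X * PowerSeries.mk (fun i => coeff i d * ((i + 1 : ℕ) : R) ^ m)) := by
  induction m generalizing d with
  | zero =>
    simp only [mul_zero, zero_add, Function.iterate_one, riordanDer, derivativeFun_X']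
    congr 1
    · congr 1
      ext n
      simp
  | succ m ih =>
    have h : 2 * (m + 1) + 1 = (2 * m + 1) + 2 := by ring
    rw [h, Function.iterate_add_apply, der_twice, ih]
    congr 2
    ext n
    simp [pow_succ]
    ring
end

section
/- For every natural number n: ∑_{k=0}^{n} 2^k · binomial(2n−k+2, n−k) = 4^{n+1} − binomial(2n+3, n+1). (Stated in ℤ, or equivalently in ℕ as ∑_{k=0}^{n} 2^k·binomial(2n−k+2, n−k) + binomial(2n+3, n+1) = 4^{n+1}.) -/
open Finset

private def S (m : ℕ) : ℤ := ∑ k ∈ range (m+1), (2:ℤ)^(m-k) * (m+k).choose k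
private def Haux (m : ℕ) : ℤ := ∑ k ∈ range (m+1), (2:ℤ)^(m-k) * (m+1+k).choose k

lemma eq2 (m : ℕ) : S (m+1) = 2 * Haux m + ((2*m+2).choose (m+1) : ℤ) := by
  unfold S Haux
  rw [sum_range_succ]
  have h1 : ∀ k ∈ range (m+1), (2:ℤ)^(m+1-k) * ((m+1+k).choose k : ℤ)
      = 2 * ((2:ℤ)^(m-k) * ((m+1+k).choose k : ℤ)) := by
    intro k hk
    rw [mem_range] at hk
    have : m+1-k = (m-k)+1 := by omega
    rw [this]; ring
  rw [sum_congr rfl h1, ← mul_sum]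
  have h2 : m+1-(m+1) = 0 := by omega
  have h3 : m+1+(m+1) = 2*m+2 := by omega
  rw [h2, h3, pow_zero, one_mul]

lemma eqK (m : ℕ) :
    (∑ k ∈ range (m+1), (2:ℤ)^(m-k) * ((m+1+k).choose (k+1) : ℤ)) + 2^(m+1)
    = 2 * S m + ((2*m+1).choose (m+1) : ℤ) := by
  have hK1 : (∑ k ∈ range (m+2), (2:ℤ)^(m+1-k) * ((m+k).choose k : ℤ))
      = (∑ k ∈ range (m+1), (2:ℤ)^(m-k) * ((m+1+k).choose (k+1) : ℤ)) + 2^(m+1) := by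
    rw [sum_range_succ']
    congr 1
    · apply sum_congr rfl
      intro k hk
      rw [mem_range] at hk
      have h1 : m+1-(k+1) = m-k := by omega
      have h2 : m+(k+1) = m+1+k := by omega
      rw [h1, h2]
    · simp
  have hK2 : (∑ k ∈ range (m+2), (2:ℤ)^(m+1-k) * ((m+k).choose k : ℤ))
      = 2 * S m + ((2*m+1).choose (m+1) : ℤ) := by
    rw [sum_range_succ]
    have h1 : ∀ k ∈ range (m+1), (2:ℤ)^(m+1-k) * ((m+k).choose k : ℤ)
        = 2 * ((2:ℤ)^(m-k) * ((m+k).choose k : ℤ)) := by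
      intro k hk
      rw [mem_range] at hk
      have : m+1-k = (m-k)+1 := by omega
      rw [this]; ring
    rw [sum_congr rfl h1, ← mul_sum]
    have h2 : m+1-(m+1) = 0 := by omega
    have h3 : m+(m+1) = 2*m+1 := by omega
    rw [h2, h3, pow_zero, one_mul]
    rfl
  linarith [hK1, hK2]

lemma eq1 (m : ℕ) : S (m+1) = 2 * S m + ((2*m+1).choose (m+1) : ℤ) + Haux m := by
  have : S (m+1) = (2:ℤ)^(m+1)
      + ((∑ k ∈ range (m+1), (2:ℤ)^(m-k) * ((m+1+k).choose (k+1) : ℤ)) + Haux m) := by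
    unfold S Haux
    rw [sum_range_succ', ← sum_add_distrib]
    have h0 : (2:ℤ)^(m+1-0) * ((m+1+0).choose 0 : ℤ) = 2^(m+1) := by simp
    rw [h0]
    rw [add_comm]
    congr 1
    apply sum_congr rfl
    intro k hk
    rw [mem_range] at hk
    have h1 : m+1-(k+1) = m-k := by omega
    have h2 : (m+1+(k+1)).choose (k+1) = (m+1+k).choose (k+1) + (m+1+k).choose k := by
      have : m+1+(k+1) = (m+1+k)+1 := by omega
      rw [this, Nat.choose_succ_succ']
      omega
    rw [h1, h2]
    push_cast
    ring
  have hK := eqK m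
  linarith

lemma choose_double (m : ℕ) : ((2*m+2).choose (m+1)) = 2 * ((2*m+1).choose (m+1)) := by
  have h1 : 2*m+2 = (2*m+1)+1 := by omega
  rw [h1, Nat.choose_succ_succ']
  have h2 : (2*m+1).choose m = (2*m+1).choose (m+1) := by
    have := Nat.choose_symm (n := 2*m+1) (k := m+1) (by omega)
    have h3 : 2*m+1-(m+1) = m := by omega
    rw [h3] at this
    exact this
  omega

lemma S_eq (m : ℕ) : S m = 4^m := by
  induction m with
  | zero => simp [S]
  | succ m ih =>
    have e1 := eq1 m
    have e2 := eq2 m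
    have cd := choose_double m
    have cd' : ((2*m+2).choose (m+1) : ℤ) = 2 * ((2*m+1).choose (m+1) : ℤ) := by
      exact_mod_cast cd
    have : S (m+1) = 4 * S m := by linarith
    rw [this, ih]; ring

/-- `∑_{k=0}^{n} 2^k·binomial(2n−k+2, n−k) = 4^{n+1} − binomial(2n+3, n+1)`. -/
theorem der_shapiro_powers_of_two (n : ℕ) :
    ∑ k ∈ Finset.range (n + 1), (2 ^ k * ((2 * n - k + 2).choose (n - k)) : ℤ) =
      4 ^ (n + 1) - (2 * n + 3).choose (n + 1) := by
  have hrefl : ∑ k ∈ Finset.range (n + 1), (2 ^ k * ((2 * n - k + 2).choose (n - k)) : ℤ)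
      = ∑ k ∈ Finset.range (n + 1), (2:ℤ)^(n-k) * ((n+2+k).choose k : ℤ) := by
    rw [← Finset.sum_range_reflect]
    apply sum_congr rfl
    intro k hk
    rw [mem_range] at hk
    simp only [Nat.add_sub_cancel]
    have h1 : 2*n - (n - k) + 2 = n + 2 + k := by omega
    have h2 : n - (n - k) = k := by omega
    rw [h1, h2]
  have hS : S (n+2) = 4 * (∑ k ∈ Finset.range (n + 1), (2:ℤ)^(n-k) * ((n+2+k).choose k : ℤ))
      + 2 * ((2*n+3).choose (n+1) : ℤ) + ((2*n+4).choose (n+2) : ℤ) := by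
    unfold S
    rw [sum_range_succ, sum_range_succ]
    have h1 : ∀ k ∈ range (n+1), (2:ℤ)^(n+2-k) * ((n+2+k).choose k : ℤ)
        = 4 * ((2:ℤ)^(n-k) * ((n+2+k).choose k : ℤ)) := by
      intro k hk
      rw [mem_range] at hk
      have : n+2-k = (n-k)+2 := by omega
      rw [this]; ring
    rw [sum_congr rfl h1, ← mul_sum]
    have h2 : n+2-(n+1) = 1 := by omega
    have h3 : n+2+(n+1) = 2*n+3 := by omega
    have h4 : n+2-(n+2) = 0 := by omega
    have h5 : n+2+(n+2) = 2*n+4 := by omega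
    rw [h2, h3, h4, h5]
    ring
  have hcd : ((2*n+4).choose (n+2)) = 2 * ((2*n+3).choose (n+2)) := by
    have := choose_double (n+1)
    have h1 : 2*(n+1)+2 = 2*n+4 := by omega
    have h2 : 2*(n+1)+1 = 2*n+3 := by omega
    rw [h1, h2] at this
    exact this
  have hsymm : (2*n+3).choose (n+2) = (2*n+3).choose (n+1) := by
    have := Nat.choose_symm (n := 2*n+3) (k := n+2) (by omega)
    have h3 : 2*n+3-(n+2) = n+1 := by omega
    rw [h3] at this
    exact this.symm
  have hcd' : ((2*n+4).choose (n+2) : ℤ) = 2 * ((2*n+3).choose (n+1) : ℤ) := by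
    rw [hcd, hsymm]; push_cast; ring
  have hval := S_eq (n+2)
  rw [hrefl]
  rw [hval, hcd'] at hS
  have h4 : (4:ℤ)^(n+2) = 4 * 4^(n+1) := by ring
  linarith
end
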